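/- Rooted plane tree count by downdegree type (Theorem of Kreweras/Armstrong–Eu): for n ≥ 1 and r = (r_1,...,r_n) with \sum_j j*r_j = n, the number of rooted plane trees with n+1 vertices and downdegree sequence (n - |r| + 1, r_1, ..., r_n), where |r| = \sum r_j, equals (1/(1+n)) * (1+n)(n)(n-1)...(n-|r|+2) / (r_1! r_2! ... r_n!), i.e., (1/(n+1)) * (n+1)!/((n+1-|r|)! * r_1!...r_n!). -/

import Mathlib

/-- A rooted plane tree: a root together with an ordered (finite) list of subtrees. -/
inductive PlaneTree : Type
  | node : List PlaneTree → PlaneTree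

namespace PlaneTree

/-- The number of vertices of a plane tree. -/
def size : PlaneTree → ℕ
  | .node ts => 1 + (ts.attach.map (fun t => size t.1)).sum
decreasing_by
  have h := List.sizeOf_lt_of_mem t.2
  simp only [PlaneTree.node.sizeOf_spec]; omega

/-- The number of vertices of a plane tree having exactly `j` children
(downdegree `j`). -/
def downCount (j : ℕ) : PlaneTree → ℕ
  | .node ts => (if ts.length = j then 1 else 0) +
      (ts.attach.map (fun t => downCount j t.1)).sum
decreasing_by
  have h := List.sizeOf_lt_of_mem t.2
  simp only [PlaneTree.node.sizeOf_spec]; omega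

/-- Łukasiewicz encoding of a plane tree: child counts in depth-first order. -/
def toList : PlaneTree → List ℕ
  | .node ts => ts.length :: (ts.attach.map (fun t => toList t.1)).flatten
decreasing_by
  have h := List.sizeOf_lt_of_mem t.2
  simp only [PlaneTree.node.sizeOf_spec]; omega

lemma size_node (ts : List PlaneTree) : (node ts).size = 1 + (ts.map size).sum := by
  rw [size]; congr 1; congr 1; exact List.attach_map_val (l := ts) (f := size)

lemma downCount_node (j : ℕ) (ts : List PlaneTree) :
    (node ts).downCount j = (if ts.length = j then 1 else 0) + (ts.map (downCount j)).sum := by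
  rw [downCount]; congr 1; congr 1; exact List.attach_map_val (l := ts) (f := downCount j)

lemma toList_node (ts : List PlaneTree) :
    (node ts).toList = ts.length :: (ts.map toList).flatten := by
  rw [toList]; congr 2; exact List.attach_map_val (l := ts) (f := toList)

/-- Encoding of a forest. -/
def listF (ts : List PlaneTree) : List ℕ := (ts.map toList).flatten

@[simp] lemma listF_nil : listF [] = [] := rfl

lemma listF_cons (t : PlaneTree) (ts : List PlaneTree) :
    listF (t :: ts) = t.toList ++ listF ts := by
  simp [listF]

lemma toList_node' (ts : List PlaneTree) :
    (node ts).toList = ts.length :: listF ts := toList_node ts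

end PlaneTree

namespace PlaneTree

theorem listF_length : ∀ ts : List PlaneTree, (listF ts).length = (ts.map size).sum
  | [] => rfl
  | node cs :: ts => by
      have h1 := listF_length cs
      have h2 := listF_length ts
      rw [listF_cons, toList_node']
      simp only [List.length_append, List.length_cons, List.map_cons, List.sum_cons, size_node]
      omega
decreasing_by
  all_goals (simp; try omega)

theorem toList_length (T : PlaneTree) : T.toList.length = T.size := by
  obtain ⟨cs⟩ := T
  rw [toList_node', size_node]
  simp [listF_length cs]
  omega

theorem listF_count (j : ℕ) : ∀ ts : List PlaneTree,
    (listF ts).count j = (ts.map (downCount j)).sum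
  | [] => rfl
  | node cs :: ts => by
      have h1 := listF_count j cs
      have h2 := listF_count j ts
      rw [listF_cons, toList_node']
      simp only [List.count_append, List.count_cons, List.map_cons, List.sum_cons,
        downCount_node]
      rw [h1, h2]
      by_cases h : cs.length = j <;> simp [h] <;> omega
decreasing_by
  all_goals (simp; try omega)

theorem toList_count (j : ℕ) (T : PlaneTree) : T.toList.count j = T.downCount j := by
  obtain ⟨cs⟩ := T
  rw [toList_node', downCount_node, ← listF_count j cs]
  simp only [List.count_cons]
  by_cases h : cs.length = j <;> simp [h] <;> omega

end PlaneTree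

/-- `Good k l` : `l` is the Łukasiewicz code of a forest of `k` plane trees. -/
def Good (k : ℕ) (l : List ℕ) : Prop :=
  l.sum + k = l.length ∧ ∀ j < l.length, j + 1 ≤ (l.take j).sum + k

lemma good_nil : Good 0 [] := by constructor <;> simp

lemma good_cons {c : ℕ} {body : List ℕ} (h : Good c body) : Good 1 (c :: body) := by
  obtain ⟨h1, h2⟩ := h
  constructor
  · simp; omega
  · intro j hj
    match j with
    | 0 => simp
    | i + 1 =>
      simp only [List.length_cons] at hj
      have := h2 i (by omega)
      simp only [List.take_succ_cons, List.sum_cons]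
      omega

lemma good_cons_inv {c : ℕ} {body : List ℕ} (h : Good 1 (c :: body)) : Good c body := by
  obtain ⟨h1, h2⟩ := h
  simp only [List.sum_cons, List.length_cons] at h1
  constructor
  · omega
  · intro j hj
    have := h2 (j + 1) (by simp; omega)
    simp only [List.take_succ_cons, List.sum_cons] at this
    omega

lemma good_append {l1 l2 : List ℕ} {k : ℕ} (h1 : Good 1 l1) (h2 : Good k l2) :
    Good (k + 1) (l1 ++ l2) := by
  obtain ⟨ha, hb⟩ := h1
  obtain ⟨hc, hd⟩ := h2
  constructor
  · simp only [List.sum_append, List.length_append]; omega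
  · intro j hj
    simp only [List.length_append] at hj
    rcases le_or_gt j l1.length with h | h
    · rcases eq_or_lt_of_le h with rfl | h
      · rw [List.take_left]
        have h0 := hd 0 (by omega)
        simp at h0
        omega
      · rw [List.take_append_of_le_length h.le]
        have := hb j h
        omega
    · rw [List.take_append, List.take_of_length_le (by omega : l1.length ≤ j),
        List.sum_append]
      have := hd (j - l1.length) (by omega)
      omega

namespace PlaneTree

theorem goodF : ∀ ts : List PlaneTree, Good ts.length (listF ts)
  | [] => good_nil
  | node cs :: ts => by
      have h1 := goodF cs
      have h2 := goodF ts
      rw [listF_cons, toList_node']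
      exact good_append (good_cons h1) h2
decreasing_by
  all_goals (simp; try omega)

theorem goodT (T : PlaneTree) : Good 1 T.toList := by
  obtain ⟨cs⟩ := T
  rw [toList_node']
  exact good_cons (goodF cs)

lemma toList_ne_nil (T : PlaneTree) : T.toList ≠ [] := by
  obtain ⟨cs⟩ := T; rw [toList_node']; simp

end PlaneTree

/-- Codes are prefix-free in concatenations. -/
lemma code_prefix_eq_aux {l1 l2 m1 m2 : List ℕ} (h1 : Good 1 l1) (h2 : Good 1 m1)
    (h : l1 ++ l2 = m1 ++ m2) (hle : l1.length ≤ m1.length) : l1 = m1 := by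
  have key : l1 = m1.take l1.length := by
    have := congrArg (List.take l1.length) h
    rwa [List.take_left, List.take_append_of_le_length hle] at this
  rcases eq_or_lt_of_le hle with heq | hlt
  · rw [key, heq, List.take_length]
  · exfalso
    have := h2.2 l1.length hlt
    rw [← key] at this
    have := h1.1
    omega

lemma code_prefix_eq {l1 l2 m1 m2 : List ℕ} (h1 : Good 1 l1) (h2 : Good 1 m1)
    (h : l1 ++ l2 = m1 ++ m2) : l1 = m1 := by
  rcases le_total l1.length m1.length with hle | hle
  · exact code_prefix_eq_aux h1 h2 h hle
  · exact (code_prefix_eq_aux h2 h1 h.symm hle).symm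

namespace PlaneTree

theorem listF_inj : ∀ ts us : List PlaneTree, listF ts = listF us → ts = us
  | [], [] => fun _ => rfl
  | [], u :: us => by
      intro h
      rw [listF_cons] at h
      exact absurd h.symm (by simp [toList_ne_nil u])
  | t :: ts, [] => by
      intro h
      rw [listF_cons] at h
      exact absurd h (by simp [toList_ne_nil t])
  | node cs :: ts, node ds :: us => by
      intro h
      rw [listF_cons, listF_cons] at h
      have hpre : (node cs).toList = (node ds).toList :=
        code_prefix_eq (goodT _) (goodT _) h
      have htail : listF ts = listF us := by
        rw [hpre] at h
        exact List.append_cancel_left h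
      have hcd : cs = ds := by
        rw [toList_node', toList_node'] at hpre
        have : listF cs = listF ds := by
          injection hpre with _ h2
        exact listF_inj cs ds this
      rw [hcd, listF_inj ts us htail]
decreasing_by
  all_goals (simp; try omega)

theorem toList_inj {T U : PlaneTree} (h : T.toList = U.toList) : T = U := by
  obtain ⟨cs⟩ := T; obtain ⟨ds⟩ := U
  rw [toList_node', toList_node'] at h
  injection h with _ h2
  rw [listF_inj cs ds h2]

end PlaneTree

lemma sum_take_mono (l : List ℕ) {i j : ℕ} (h : i ≤ j) :
    (l.take i).sum ≤ (l.take j).sum := by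
  have : l.take j = l.take i ++ (l.drop i).take (j - i) := by
    rw [← List.take_add]; congr 1; omega
  rw [this, List.sum_append]; omega

/-- Discrete IVT : a walk starting at 0, with down-steps of at most 1,
reaching below `-1`, hits `-1`. -/
lemma exists_hit_neg_one (g : ℕ → ℤ) (N : ℕ) (h0 : g 0 = 0) (hN : g N ≤ -1)
    (hstep : ∀ j, g j - 1 ≤ g (j + 1)) : ∃ t ≤ N, g t = -1 := by
  induction N with
  | zero => omega
  | succ N ih =>
    rcases le_or_gt (g N) (-1) with h | h
    · obtain ⟨t, ht, hgt⟩ := ih h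
      exact ⟨t, by omega, hgt⟩
    · exact ⟨N + 1, le_refl _, by have := hstep N; omega⟩

lemma nonneg_before_hit (g : ℕ → ℤ) (h0 : g 0 = 0)
    (hstep : ∀ j, g j - 1 ≤ g (j + 1)) (j : ℕ) (hj : ∀ i ≤ j, g i ≠ -1) : 0 ≤ g j := by
  induction j with
  | zero => omega
  | succ j ih =>
    have h1 : 0 ≤ g j := ih fun i hi => hj i (by omega)
    have h2 := hstep j
    have h3 := hj (j + 1) le_rfl
    omega

/-- The walk associated to a list. -/
private def gw (l : List ℕ) (j : ℕ) : ℤ := ((l.take j).sum : ℤ) - j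

private lemma gw_step (l : List ℕ) (j : ℕ) : gw l j - 1 ≤ gw l (j + 1) := by
  have := sum_take_mono l (by omega : j ≤ j + 1)
  simp only [gw]
  omega

theorem exists_forest : ∀ N : ℕ, ∀ l : List ℕ, ∀ k : ℕ, l.length < N → Good k l →
    ∃ ts : List PlaneTree, ts.length = k ∧ PlaneTree.listF ts = l := by
  intro N
  induction N with
  | zero => intro l k h; omega
  | succ N ih =>
    intro l k hlen hg
    match k with
    | 0 =>
      -- l must be empty
      have : l = [] := by
        cases l with
        | nil => rfl
        | cons a t =>
          have := hg.2 0 (by simp)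
          simp at this
      exact ⟨[], rfl, by rw [this]; rfl⟩
    | k' + 1 =>
      obtain ⟨hsum, hpre⟩ := hg
      -- find the first passage time t
      have hex : ∃ t ≤ l.length, gw l t = -1 := by
        apply exists_hit_neg_one _ _ (by simp [gw]) _ (gw_step l)
        simp only [gw, List.take_length]
        omega
      have hex' : ∃ t, gw l t = -1 := by obtain ⟨t, _, h⟩ := hex; exact ⟨t, h⟩
      classical
      set t := Nat.find hex' with ht
      have hPt : gw l t = -1 := Nat.find_spec hex'
      have htle : t ≤ l.length := by
        obtain ⟨t0, ht0, h0⟩ := hex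
        exact le_trans (Nat.find_min' hex' h0) ht0
      have ht1 : 1 ≤ t := by
        rcases Nat.eq_zero_or_pos t with h | h
        · exfalso; rw [h] at hPt; simp [gw] at hPt
        · exact h
      have hbefore : ∀ j < t, 0 ≤ gw l j := by
        intro j hj
        exact nonneg_before_hit (gw l) (by simp [gw]) (gw_step l) j
          (fun i hi => Nat.find_min hex' (by omega))
      -- l1 = take t l is a tree code
      have hsum1 : (l.take t).sum + 1 = t := by
        have := hPt
        simp only [gw] at this
        omega
      have hgood1 : Good 1 (l.take t) := by
        constructor
        · rw [List.length_take, min_eq_left htle]; exact hsum1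
        · intro j hj
          rw [List.length_take, min_eq_left htle] at hj
          rw [List.take_take, min_eq_left (by omega : j ≤ t)]
          have := hbefore j hj
          simp only [gw] at this
          omega
      -- l2 = drop t l is a (k') forest code
      have hsplit : (l.take t).sum + (l.drop t).sum = l.sum := by
        rw [← List.sum_append, List.take_append_drop]
      have hgood2 : Good k' (l.drop t) := by
        constructor
        · rw [List.length_drop]; omega
        · intro j hj
          rw [List.length_drop] at hj
          have hcalc : (l.take (t + j)).sum = (l.take t).sum + ((l.drop t).take j).sum := by
            rw [List.take_add, List.sum_append]
          have := hpre (t + j) (by omega)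
          rw [hcalc] at this
          omega
      -- build first tree from take t
      obtain ⟨c, body, hcb⟩ : ∃ c body, l.take t = c :: body := by
        cases hlt : l.take t with
        | nil => exfalso; have := congrArg List.length hlt; simp [min_eq_left htle] at this; omega
        | cons c body => exact ⟨c, body, rfl⟩
      have hbodylen : body.length = t - 1 := by
        have := congrArg List.length hcb
        simp [min_eq_left htle] at this
        omega
      have hgoodbody : Good c body := good_cons_inv (hcb ▸ hgood1)
      obtain ⟨cs, hcs1, hcs2⟩ := ih body c (by omega) hgoodbody
      obtain ⟨ts2, hts1, hts2⟩ := ih (l.drop t) k' (by rw [List.length_drop]; omega) hgood2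
      refine ⟨PlaneTree.node cs :: ts2, by simp [hts1], ?_⟩
      rw [PlaneTree.listF_cons, PlaneTree.toList_node', hcs1, hcs2, hts2, ← hcb,
        List.take_append_drop]

section CycleLemma

variable {l : List ℕ}

/-- Prefix sums of a rotation, case not wrapping around. -/
lemma rotate_take_sum_a {k t : ℕ} (hk : k ≤ l.length) (ht : k + t ≤ l.length) :
    ((l.rotate k).take t).sum + (l.take k).sum = (l.take (k + t)).sum := by
  rw [List.rotate_eq_drop_append_take hk,
    List.take_append_of_le_length (by rw [List.length_drop]; omega),
    List.take_add, List.sum_append]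
  omega

/-- Prefix sums of a rotation, wrapping case. -/
lemma rotate_take_sum_b {k t : ℕ} (hk : k ≤ l.length) (h1 : l.length ≤ k + t)
    (h2 : t ≤ l.length) :
    ((l.rotate k).take t).sum = (l.drop k).sum + (l.take (t - (l.length - k))).sum := by
  rw [List.rotate_eq_drop_append_take hk, List.take_append,
    List.take_of_length_le (by rw [List.length_drop]; omega), List.sum_append,
    List.length_drop, List.take_take, min_eq_left (by omega)]

lemma rotate_good_iff (hlen : l.sum + 1 = l.length) {k : ℕ} (hk : k < l.length) :
    Good 1 (l.rotate k) ↔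
      ((∀ j, k ≤ j → j ≤ l.length → j - k < l.length → gw l k ≤ gw l j) ∧
       (∀ u, 1 ≤ u → u < k → gw l k + 1 ≤ gw l u)) := by
  have hsum : (l.rotate k).sum = l.sum := (l.rotate_perm k).sum_eq
  have hL : (l.rotate k).length = l.length := List.length_rotate l k
  have hsplit : (l.take k).sum + (l.drop k).sum = l.sum := by
    rw [← List.sum_append, List.take_append_drop]
  constructor
  · rintro ⟨-, h2⟩
    constructor
    · intro j hkj hjle hjk
      have ha := rotate_take_sum_a (le_of_lt hk) (by omega : k + (j - k) ≤ l.length)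
      have hthis := h2 (j - k) (by omega)
      rw [show k + (j - k) = j by omega] at ha
      simp only [gw]
      omega
    · intro u hu1 hu2
      have hb := rotate_take_sum_b (le_of_lt hk)
        (by omega : l.length ≤ k + (l.length - k + u)) (by omega)
      have hthis := h2 (l.length - k + u) (by omega)
      rw [show l.length - k + u - (l.length - k) = u by omega] at hb
      simp only [gw]
      omega
  · rintro ⟨hA, hB⟩
    refine ⟨by omega, ?_⟩
    intro t htl
    rw [hL] at htl
    rcases le_or_gt (k + t) l.length with h | h
    · have ha := rotate_take_sum_a (le_of_lt hk) h
      have hthis := hA (k + t) (by omega) (by omega) (by omega)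
      simp only [gw] at hthis
      omega
    · have hb := rotate_take_sum_b (t := t) (le_of_lt hk) (by omega) (by omega)
      have hthis := hB (t - (l.length - k)) (by omega) (by omega)
      rw [hb]
      simp only [gw] at hthis
      omega

theorem cycle_unique (hlen : l.sum + 1 = l.length) :
    ∃! k, k < l.length ∧ Good 1 (l.rotate k) := by
  classical
  have hpos : 0 < l.length := by omega
  have hslen : gw l l.length = -1 := by
    simp only [gw, List.take_length]; omega
  have hg0 : gw l 0 = 0 := by simp [gw]
  obtain ⟨k0, hk0mem, hk0min⟩ :=
    (Finset.range l.length).exists_min_image (gw l) ⟨0, Finset.mem_range.2 hpos⟩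
  rw [Finset.mem_range] at hk0mem
  have hexmin : ∃ k, k < l.length ∧ ∀ j < l.length, gw l k ≤ gw l j :=
    ⟨k0, hk0mem, fun j hj => hk0min j (Finset.mem_range.2 hj)⟩
  obtain ⟨k1, hk1len, hk1min, hfirst⟩ :
      ∃ k1, k1 < l.length ∧ (∀ j < l.length, gw l k1 ≤ gw l j) ∧
        (∀ u < k1, gw l k1 + 1 ≤ gw l u) := by
    refine ⟨Nat.find hexmin, (Nat.find_spec hexmin).1, (Nat.find_spec hexmin).2, ?_⟩
    intro u hu
    have hnot := Nat.find_min hexmin hu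
    push_neg at hnot
    obtain ⟨j, hj, hgj⟩ := hnot (lt_trans hu (Nat.find_spec hexmin).1)
    have := (Nat.find_spec hexmin).2 j hj
    omega
  refine ⟨k1, ⟨hk1len, ?_⟩, ?_⟩
  · rw [rotate_good_iff hlen hk1len]
    constructor
    · intro j hkj hjle hjk
      rcases lt_or_ge j l.length with h | h
      · exact hk1min j h
      · have hj : j = l.length := by omega
        have hk1pos : 1 ≤ k1 := by omega
        have := hfirst 0 (by omega)
        rw [hg0] at this
        rw [hj, hslen]
        omega
    · exact fun u _ hu => hfirst u hu
  · rintro k' ⟨hk'len, hk'good⟩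
    rw [rotate_good_iff hlen hk'len] at hk'good
    obtain ⟨hA, hB⟩ := hk'good
    by_contra hne
    rcases lt_or_gt_of_ne hne with h | h
    · have h1 := hfirst k' h
      have h2 := hA k1 (by omega) (by omega) (by omega)
      omega
    · rcases Nat.eq_zero_or_pos k1 with h0 | h0
      · have h1 := hA l.length (by omega) le_rfl (by omega)
        have h2 := hk1min k' hk'len
        rw [h0, hg0] at h2
        rw [hslen] at h1
        omega
      · have h1 := hB k1 h0 h
        have h2 := hk1min k' hk'len
        omega

end CycleLemma

section ListsCount

lemma lists_eq_biUnion (m : Multiset ℕ) (hm : m ≠ 0) :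
    m.lists.toFinset = m.toFinset.biUnion (fun a => ((m.erase a).lists.toFinset).image (a :: ·)) := by
  classical
  ext l
  simp only [Multiset.mem_toFinset, Multiset.mem_lists_iff, Finset.mem_biUnion, Finset.mem_image]
  constructor
  · intro h
    cases l with
    | nil => exfalso; apply hm; simpa using h
    | cons a t =>
      refine ⟨a, ?_, t, ?_, rfl⟩
      · rw [h]; simp
      · rw [h]
        simp [Multiset.erase_cons_head]
  · rintro ⟨a, ha, t, ht, rfl⟩
    rw [show (⟦a :: t⟧ : Multiset ℕ) = a ::ₘ ⟦t⟧ from rfl, ← ht,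
      Multiset.cons_erase ha]

lemma lists_card_rec (m : Multiset ℕ) (hm : m ≠ 0) :
    m.lists.toFinset.card = ∑ a ∈ m.toFinset, (m.erase a).lists.toFinset.card := by
  classical
  rw [lists_eq_biUnion m hm, Finset.card_biUnion]
  · exact Finset.sum_congr rfl fun a _ =>
      Finset.card_image_of_injective _ (fun x y h => by injection h)
  · intro a _ b _ hab
    simp only [Finset.disjoint_left, Finset.mem_image]
    rintro l ⟨t, _, rfl⟩ ⟨t', _, h⟩
    exact hab (by injection h; omega)

theorem lists_card_mul (m : Multiset ℕ) :
    m.lists.toFinset.card * ∏ a ∈ m.toFinset, (m.count a).factorial = (Multiset.card m).factorial := by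
  classical
  induction m using Multiset.strongInductionOn with
  | ih m ih =>
  rcases eq_or_ne m 0 with rfl | hm
  · have h0 : (Multiset.lists (0 : Multiset ℕ)).toFinset.card = 1 := by
      rw [show (0 : Multiset ℕ) = (↑([] : List ℕ)) from rfl, Multiset.lists_coe]
      simp
    simp [h0]
  · have hcard : 0 < Multiset.card m := by
      rwa [Multiset.card_pos]
    have key : ∀ a ∈ m.toFinset,
        (∏ b ∈ m.toFinset, (m.count b).factorial)
          = (∏ b ∈ (m.erase a).toFinset, ((m.erase a).count b).factorial) * m.count a := by
      intro a ha
      rw [Multiset.mem_toFinset] at ha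
      have hsub : (m.erase a).toFinset ⊆ m.toFinset :=
        Multiset.toFinset_subset.2 (Multiset.subset_of_le (Multiset.erase_le a m))
      have hext : (∏ b ∈ (m.erase a).toFinset, ((m.erase a).count b).factorial)
          = ∏ b ∈ m.toFinset, ((m.erase a).count b).factorial := by
        apply Finset.prod_subset hsub
        intro b _ hb
        rw [Multiset.mem_toFinset, ← Multiset.count_pos] at hb
        have : Multiset.count b (m.erase a) = 0 := by omega
        rw [this]; rfl
      rw [hext]
      have hamem : a ∈ m.toFinset := Multiset.mem_toFinset.2 ha
      rw [← Finset.mul_prod_erase _ _ hamem, ← Finset.mul_prod_erase _ _ hamem]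
      have h2 : ∏ b ∈ m.toFinset.erase a, ((m.erase a).count b).factorial
          = ∏ b ∈ m.toFinset.erase a, (m.count b).factorial :=
        Finset.prod_congr rfl fun b hb => by
          rw [Multiset.count_erase_of_ne (Finset.ne_of_mem_erase hb) m]
      rw [h2, Multiset.count_erase_self]
      have hpos : 0 < m.count a := Multiset.count_pos.2 ha
      rw [← Nat.mul_factorial_pred hpos.ne']
      ring
    calc m.lists.toFinset.card * ∏ a ∈ m.toFinset, (m.count a).factorial
        = ∑ a ∈ m.toFinset, (m.erase a).lists.toFinset.card
            * ∏ b ∈ m.toFinset, (m.count b).factorial := by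
          rw [lists_card_rec m hm, Finset.sum_mul]
      _ = ∑ a ∈ m.toFinset, ((Multiset.card m - 1).factorial * m.count a) := by
          apply Finset.sum_congr rfl
          intro a ha
          rw [key a ha, ← mul_assoc,
            ih (m.erase a) (Multiset.erase_lt.2 (Multiset.mem_toFinset.1 ha)),
            Multiset.card_erase_of_mem (Multiset.mem_toFinset.1 ha)]
          rfl
      _ = (Multiset.card m - 1).factorial * Multiset.card m := by
          rw [← Finset.mul_sum, Multiset.toFinset_sum_count_eq]
      _ = (Multiset.card m).factorial := by
          rw [mul_comm, Nat.mul_factorial_pred hcard.ne']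

end ListsCount

section Content

lemma count_filter_length (N : ℕ) : ∀ l : List ℕ,
    (∑ j ∈ Finset.range N, l.count j) + (l.filter (fun x => N ≤ x)).length = l.length := by
  intro l
  induction l with
  | nil => simp
  | cons a t ih =>
    simp only [List.count_cons, Finset.sum_add_distrib, List.length_cons]
    have h1 : (∑ j ∈ Finset.range N, if a = j then 1 else 0)
        = if a ∈ Finset.range N then 1 else 0 := by
      rw [Finset.sum_ite_eq]
    rcases lt_or_ge a N with h | h
    · have : (List.filter (fun x => decide (N ≤ x)) (a :: t))
          = List.filter (fun x => decide (N ≤ x)) t := by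
        rw [List.filter_cons_of_neg]; simp; omega
      rw [this]
      simp only [beq_iff_eq] at *
      rw [h1]
      simp only [Finset.mem_range]
      rw [if_pos h]
      omega
    · have : (List.filter (fun x => decide (N ≤ x)) (a :: t))
          = a :: List.filter (fun x => decide (N ≤ x)) t := by
        rw [List.filter_cons_of_pos]; simpa
      rw [this]
      simp only [beq_iff_eq] at *
      rw [h1]
      simp only [Finset.mem_range]
      rw [if_neg (by omega)]
      simp only [List.length_cons]
      omega

lemma sum_eq_weighted_counts (N : ℕ) : ∀ l : List ℕ, (∀ x ∈ l, x < N) →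
    l.sum = ∑ j ∈ Finset.range N, j * l.count j := by
  intro l
  induction l with
  | nil => simp
  | cons a t ih =>
    intro h
    simp only [List.sum_cons, List.count_cons]
    have ht := ih (fun x hx => h x (List.mem_cons_of_mem a hx))
    have h2 : (∑ j ∈ Finset.range N, j * (t.count j + if a = j then 1 else 0))
        = (∑ j ∈ Finset.range N, j * t.count j)
          + ∑ j ∈ Finset.range N, (if a = j then j else 0) := by
      rw [← Finset.sum_add_distrib]
      apply Finset.sum_congr rfl
      intro j _
      by_cases hj : a = j <;> simp [hj] <;> ring
    have h3 : (∑ j ∈ Finset.range N, if a = j then j else 0) = a := by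
      rw [Finset.sum_ite_eq]
      simp [h a (List.mem_cons_self)]
    simp only [beq_iff_eq]
    rw [h2, h3]
    omega

lemma multiset_card_finsum {α : Type*} (s : Finset α) (f : α → Multiset ℕ) :
    Multiset.card (∑ i ∈ s, f i) = ∑ i ∈ s, Multiset.card (f i) := by
  classical
  induction s using Finset.cons_induction with
  | empty => simp
  | cons a s ha ih => simp [Finset.sum_cons, ih]

end Content

section Main

variable (n : ℕ) (r : Fin n → ℕ)

/-- The target multiset of downdegrees. -/
def targetM : Multiset ℕ :=
  Multiset.replicate (n - (∑ j, r j) + 1) 0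
    + ∑ j : Fin n, Multiset.replicate (r j) ((j : ℕ) + 1)

lemma targetM_count0 : (targetM n r).count 0 = n - (∑ j, r j) + 1 := by
  rw [targetM, Multiset.count_add, Multiset.count_replicate, if_pos rfl,
    Multiset.count_sum']
  have hz : (∑ i : Fin n, (Multiset.replicate (r i) ((i : ℕ) + 1)).count 0) = 0 :=
    Finset.sum_eq_zero (fun j _ => by rw [Multiset.count_replicate, if_neg (by omega)])
  rw [hz]

lemma targetM_countS (j : Fin n) : (targetM n r).count ((j : ℕ) + 1) = r j := by
  rw [targetM, Multiset.count_add, Multiset.count_replicate, if_neg (by omega),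
    Multiset.count_sum']
  have h : ∀ i : Fin n, (Multiset.replicate (r i) ((i : ℕ) + 1)).count ((j : ℕ) + 1)
      = if j = i then r i else 0 := by
    intro i
    rw [Multiset.count_replicate]
    by_cases hij : j = i
    · subst hij; simp
    · rw [if_neg (fun hc => hij (Fin.ext (by omega))), if_neg hij]
  rw [Finset.sum_congr rfl (fun i _ => h i),
    Finset.sum_ite_eq Finset.univ j (fun i => r i), if_pos (Finset.mem_univ j)]
  omega

lemma targetM_countBig (a : ℕ) (ha : n + 1 ≤ a) : (targetM n r).count a = 0 := by
  have hj : ∀ j : Fin n, (j : ℕ) < n := fun j => j.2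
  rw [targetM, Multiset.count_add, Multiset.count_replicate, if_neg (by omega),
    Multiset.count_sum']
  have hz : (∑ i : Fin n, (Multiset.replicate (r i) ((i : ℕ) + 1)).count a) = 0 :=
    Finset.sum_eq_zero (fun i _ => by
      rw [Multiset.count_replicate, if_neg (by have := hj i; omega)])
  rw [hz]

lemma targetM_card (hR : (∑ j, r j) ≤ n) : Multiset.card (targetM n r) = n + 1 := by
  rw [targetM, Multiset.card_add, Multiset.card_replicate, multiset_card_finsum]
  simp only [Multiset.card_replicate]
  omega

end Main

/-- Kreweras / Armstrong–Eu: for `n ≥ 1` and `r = (r_1,…,r_n)` (encoded by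
`r : Fin n → ℕ`, `r j` being `r_{j+1}`) with `∑ j, j * r_j = n`, the number of
rooted plane trees with `n+1` vertices and downdegree sequence
`(n - |r| + 1, r_1, …, r_n)` equals `(1/(n+1)) * (n+1)! / ((n+1-|r|)! r_1!⋯r_n!)`,
i.e. `n! / ((n+1-|r|)! ⬝ r_1!⋯r_n!)` — stated multiplicatively to avoid division. -/
theorem planeTree_count_by_downdegree (n : ℕ) (hn : 1 ≤ n) (r : Fin n → ℕ)
    (hsum : ∑ j : Fin n, ((j : ℕ) + 1) * r j = n) :
    Nat.card {T : PlaneTree // T.size = n + 1 ∧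
        T.downCount 0 = n - (∑ j, r j) + 1 ∧
        ∀ j : Fin n, T.downCount ((j : ℕ) + 1) = r j} *
      ((n + 1 - ∑ j, r j).factorial * ∏ j : Fin n, (r j).factorial)
      = n.factorial := by
  classical
  have hR : (∑ j, r j) ≤ n := by
    calc (∑ j, r j) ≤ ∑ j : Fin n, ((j : ℕ) + 1) * r j :=
          Finset.sum_le_sum fun j _ => Nat.le_mul_of_pos_left _ (by omega)
      _ = n := hsum
  set R := ∑ j, r j with hRdef
  set M := targetM n r with hMdef
  set PW : List ℕ → Prop := fun l => l.length = n + 1 ∧ l.count 0 = n - R + 1 ∧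
    ∀ j : Fin n, l.count ((j : ℕ) + 1) = r j with hPWdef
  set PC : List ℕ → Prop := fun l => PW l ∧ Good 1 l with hPCdef
  -- basic consequences of PW
  have hWsmall : ∀ l, PW l → (∀ x ∈ l, x < n + 1) := by
    rintro l ⟨hlen, hc0, hcS⟩ x hx
    have htot : (∑ j ∈ Finset.range (n + 1), l.count j) = n + 1 := by
      rw [Finset.sum_range_succ' (fun j => l.count j) n]
      rw [Finset.sum_range (fun i => l.count (i + 1))]
      have : (∑ i : Fin n, l.count ((i : ℕ) + 1)) = R := by
        rw [hRdef]; exact Finset.sum_congr rfl fun i _ => hcS i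
      omega
    have hfl := count_filter_length (n + 1) l
    rw [htot, hlen] at hfl
    have hnil : l.filter (fun x => n + 1 ≤ x) = [] := List.length_eq_zero_iff.1 (by omega)
    by_contra hcon
    have : x ∈ l.filter (fun x => n + 1 ≤ x) := by
      rw [List.mem_filter]
      exact ⟨hx, by simpa using Nat.le_of_not_lt hcon⟩
    rw [hnil] at this
    exact absurd this (List.not_mem_nil)
  have hWsum : ∀ l, PW l → l.sum + 1 = l.length := by
    rintro l hW
    obtain ⟨hlen, hc0, hcS⟩ := hW
    have := sum_eq_weighted_counts (n + 1) l (hWsmall l ⟨hlen, hc0, hcS⟩)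
    rw [Finset.sum_range_succ' (fun j => j * l.count j) n] at this
    simp only [zero_mul, add_zero] at this
    rw [Finset.sum_range (fun i => (i + 1) * l.count (i + 1))] at this
    have h2 : (∑ i : Fin n, ((i : ℕ) + 1) * l.count ((i : ℕ) + 1)) = n := by
      rw [show (∑ i : Fin n, ((i : ℕ) + 1) * l.count ((i : ℕ) + 1))
          = ∑ i : Fin n, ((i : ℕ) + 1) * r i from
        Finset.sum_congr rfl fun i _ => by rw [hcS i]]
      exact hsum
    omega
  -- Step 1 : trees ≃ codes
  have e1 : Nat.card {T : PlaneTree // T.size = n + 1 ∧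
        T.downCount 0 = n - R + 1 ∧
        ∀ j : Fin n, T.downCount ((j : ℕ) + 1) = r j} = Nat.card {l : List ℕ // PC l} := by
    apply Nat.card_congr
    refine Equiv.ofBijective (fun T => ⟨T.1.toList, ?_, T.1.goodT⟩) ⟨?_, ?_⟩
    · obtain ⟨T, h1, h2, h3⟩ := T
      refine ⟨?_, ?_, ?_⟩
      · rw [PlaneTree.toList_length, h1]
      · rw [PlaneTree.toList_count, h2]
      · intro j; rw [PlaneTree.toList_count, h3 j]
    · rintro ⟨T, hT⟩ ⟨U, hU⟩ h
      simp only [Subtype.mk.injEq] at h ⊢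
      exact PlaneTree.toList_inj h
    · rintro ⟨l, ⟨hlen, hc0, hcS⟩, hgood⟩
      obtain ⟨ts, hts1, hts2⟩ := exists_forest (l.length + 1) l 1 (by omega) hgood
      match ts, hts1 with
      | [T], _ =>
        have hTl : T.toList = l := by
          rw [← hts2, PlaneTree.listF_cons, PlaneTree.listF_nil, List.append_nil]
        refine ⟨⟨T, ?_, ?_, ?_⟩, ?_⟩
        · rw [← PlaneTree.toList_length, hTl, hlen]
        · rw [← PlaneTree.toList_count, hTl, hc0]
        · intro j; rw [← PlaneTree.toList_count, hTl]; exact hcS j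
        · simp only [Subtype.mk.injEq]; exact hTl
  -- Step 2 : cycle lemma bijection
  have e2 : Nat.card {l : List ℕ // PC l} * (n + 1) = Nat.card {l : List ℕ // PW l} := by
    have := Nat.card_congr
      (Equiv.ofBijective (fun p : {l : List ℕ // PC l} × Fin (n + 1) =>
        (⟨p.1.1.rotate p.2, by
          obtain ⟨⟨w, hw, hgood⟩, k⟩ := p
          obtain ⟨hlen, hc0, hcS⟩ := hw
          refine ⟨?_, ?_, ?_⟩
          · rw [List.length_rotate, hlen]
          · rw [(w.rotate_perm k).count_eq, hc0]
          · intro j; rw [(w.rotate_perm k).count_eq]; exact hcS j⟩ :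
            {l : List ℕ // PW l})) ⟨?_, ?_⟩)
    · rw [Nat.card_prod, show Nat.card (Fin (n + 1)) = n + 1 from by simp] at this
      exact this
    -- injective
    · rintro ⟨⟨w, hw, hwgood⟩, k⟩ ⟨⟨w', hw', hw'good⟩, k'⟩ heq
      simp only [Subtype.mk.injEq] at heq
      set l := w.rotate (k : ℕ) with hldef
      have hl'l : w'.rotate (k' : ℕ) = l := heq.symm
      have hwlen : w.length = n + 1 := hw.1
      have hw'len : w'.length = n + 1 := hw'.1
      have hlW : PW l := by
        refine ⟨by rw [hldef, List.length_rotate, hwlen], ?_, ?_⟩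
        · rw [hldef, (w.rotate_perm (k : ℕ)).count_eq]; exact hw.2.1
        · intro j; rw [hldef, (w.rotate_perm (k : ℕ)).count_eq]; exact hw.2.2 j
      have hsuml : l.sum + 1 = l.length := hWsum l hlW
      have hllen : l.length = n + 1 := hlW.1
      obtain ⟨j0, hj0, huniq⟩ := cycle_unique hsuml
      have key : ∀ (v : List ℕ) (m : Fin (n + 1)), v.length = n + 1 → Good 1 v →
          v.rotate (m : ℕ) = l →
          (if (m : ℕ) = 0 then 0 else n + 1 - (m : ℕ)) = j0 := by
        intro v m hvlen hvgood hvrot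
        apply huniq
        rcases Nat.eq_zero_or_pos (m : ℕ) with h0 | h0
        · rw [h0, List.rotate_zero] at hvrot
          rw [if_pos h0]
          subst hvrot
          exact ⟨by omega, by rw [List.rotate_zero]; exact hvgood⟩
        · rw [if_neg (by omega)]
          have hm : (m : ℕ) < n + 1 := m.2
          constructor
          · omega
          · have : l.rotate (n + 1 - (m : ℕ)) = v := by
              rw [← hvrot, List.rotate_rotate, show (m : ℕ) + (n + 1 - (m : ℕ)) = n + 1 by omega,
                ← hvlen, List.rotate_length]
            rw [this]; exact hvgood
      have hk := key w k hwlen hwgood rfl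
      have hk' := key w' k' hw'len hw'good hl'l
      have hkk' : (k : ℕ) = (k' : ℕ) := by
        have h1 := k.2
        have h2 := k'.2
        rw [← hk'] at hk
        rcases Nat.eq_zero_or_pos (k : ℕ) with h0 | h0 <;>
          rcases Nat.eq_zero_or_pos (k' : ℕ) with h0' | h0'
        · omega
        · rw [if_pos h0, if_neg (by omega)] at hk; omega
        · rw [if_neg (by omega), if_pos h0'] at hk; omega
        · rw [if_neg (by omega), if_neg (by omega)] at hk; omega
      have hww' : w = w' := by
        have : w.rotate (k : ℕ) = w'.rotate (k : ℕ) := by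
          have h12 : w.rotate (k : ℕ) = w'.rotate (k' : ℕ) := hldef.symm.trans heq
          rwa [← hkk'] at h12
        have h2 := congrArg (fun t => List.rotate t (n + 1 - (k : ℕ))) this
        simp only [List.rotate_rotate] at h2
        rcases Nat.eq_zero_or_pos (k : ℕ) with h0 | h0
        · rw [h0, List.rotate_zero, List.rotate_zero] at this
          exact this
        · rwa [show (k : ℕ) + (n + 1 - (k : ℕ)) = n + 1 by have := k.2; omega,
            ← hwlen, List.rotate_length, hwlen, ← hw'len, List.rotate_length] at h2
      apply Prod.ext
      · exact Subtype.ext hww'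
      · exact Fin.ext hkk'
    -- surjective
    · rintro ⟨l, hl⟩
      have hsuml : l.sum + 1 = l.length := hWsum l hl
      have hllen : l.length = n + 1 := hl.1
      obtain ⟨j0, ⟨hj0len, hj0good⟩, _⟩ := cycle_unique hsuml
      rw [hllen] at hj0len
      refine ⟨⟨⟨l.rotate j0, ⟨?_, ?_, ?_⟩, hj0good⟩,
        ⟨if j0 = 0 then 0 else n + 1 - j0, by split <;> omega⟩⟩, ?_⟩
      · rw [List.length_rotate, hllen]
      · rw [(l.rotate_perm j0).count_eq]; exact hl.2.1
      · intro j; rw [(l.rotate_perm j0).count_eq]; exact hl.2.2 j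
      · apply Subtype.ext
        simp only
        rcases Nat.eq_zero_or_pos j0 with h0 | h0
        · rw [h0]
          simp [List.rotate_zero]
        · rw [if_neg (by omega), List.rotate_rotate,
            show j0 + (n + 1 - j0) = n + 1 by omega, ← hllen, List.rotate_length]
  -- Step 3 : count words
  have e3 : Nat.card {l : List ℕ // PW l} = M.lists.toFinset.card := by
    have hiff : ∀ l : List ℕ, l ∈ M.lists.toFinset ↔ PW l := by
      intro l
      rw [Multiset.mem_toFinset, Multiset.mem_lists_iff]
      have hcoe : (⟦l⟧ : Multiset ℕ) = (l : Multiset ℕ) := rfl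
      constructor
      · intro h
        have hcnt : ∀ a, l.count a = M.count a := by
          intro a
          rw [← Multiset.coe_count, ← hcoe, ← h]
        have hcard : l.length = n + 1 := by
          have := congrArg Multiset.card h
          rw [hcoe] at this
          rw [← Multiset.coe_card, ← this, hMdef, targetM_card n r hR]
        refine ⟨hcard, ?_, ?_⟩
        · rw [hcnt 0, hMdef, targetM_count0]
        · intro j; rw [hcnt _, hMdef, targetM_countS]
      · intro hW
        rw [hcoe]
        ext a
        rw [Multiset.coe_count]
        rcases lt_or_ge a (n + 1) with ha | ha
        · match a, ha with
          | 0, _ => rw [hW.2.1, hMdef, targetM_count0]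
          | (j + 1), hj =>
            have hjn : j < n := by omega
            have h1 : List.count (j + 1) l = r ⟨j, hjn⟩ := hW.2.2 ⟨j, hjn⟩
            have h2 : Multiset.count (j + 1) (targetM n r) = r ⟨j, hjn⟩ :=
              targetM_countS n r ⟨j, hjn⟩
            rw [h1, hMdef, h2]
        · rw [hMdef, targetM_countBig n r a ha]
          symm
          rw [List.count_eq_zero]
          intro hmem
          exact absurd (hWsmall l hW a hmem) (by omega)
    calc Nat.card {l : List ℕ // PW l} = Nat.card {l : List ℕ // l ∈ M.lists.toFinset} :=
          Nat.card_congr (Equiv.subtypeEquivRight fun l => (hiff l).symm)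
      _ = M.lists.toFinset.card := Nat.card_eq_finsetCard _
  -- Step 4 : multinomial count
  have e4 : M.lists.toFinset.card * ((n + 1 - R).factorial * ∏ j : Fin n, (r j).factorial)
      = (n + 1).factorial := by
    have hprod : (∏ a ∈ M.toFinset, (M.count a).factorial)
        = (n + 1 - R).factorial * ∏ j : Fin n, (r j).factorial := by
      have hsub : M.toFinset ⊆ Finset.range (n + 1) := by
        intro a ha
        rw [Multiset.mem_toFinset, ← Multiset.count_pos] at ha
        rw [Finset.mem_range]
        by_contra hcon
        rw [hMdef, targetM_countBig n r a (by omega)] at ha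
        omega
      have hext : (∏ a ∈ M.toFinset, (M.count a).factorial)
          = ∏ a ∈ Finset.range (n + 1), (M.count a).factorial := by
        apply Finset.prod_subset hsub
        intro a _ ha
        rw [Multiset.mem_toFinset, ← Multiset.count_pos] at ha
        have : M.count a = 0 := by omega
        rw [this]; rfl
      rw [hext, Finset.prod_range_succ' (fun a => (M.count a).factorial) n, hMdef,
        targetM_count0,
        show (n - R + 1).factorial = (n + 1 - R).factorial from by congr 1; omega,
        mul_comm]
      congr 1
      rw [Finset.prod_range (fun i => ((targetM n r).count (i + 1)).factorial)]
      refine Finset.prod_congr rfl fun i _ => ?_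
      rw [targetM_countS]
    have := lists_card_mul M
    rw [hprod, hMdef, targetM_card n r hR] at this
    rw [← hMdef] at this
    exact this
  -- conclusion
  have hfin : (Nat.card {T : PlaneTree // T.size = n + 1 ∧
        T.downCount 0 = n - R + 1 ∧
        ∀ j : Fin n, T.downCount ((j : ℕ) + 1) = r j} *
      ((n + 1 - R).factorial * ∏ j : Fin n, (r j).factorial)) * (n + 1)
      = n.factorial * (n + 1) := by
    rw [e1]
    calc Nat.card {l : List ℕ // PC l} * ((n + 1 - R).factorial * ∏ j : Fin n, (r j).factorial)
          * (n + 1)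
        = (Nat.card {l : List ℕ // PC l} * (n + 1))
            * ((n + 1 - R).factorial * ∏ j : Fin n, (r j).factorial) := by ring
      _ = Nat.card {l : List ℕ // PW l}
            * ((n + 1 - R).factorial * ∏ j : Fin n, (r j).factorial) := by rw [e2]
      _ = M.lists.toFinset.card * ((n + 1 - R).factorial * ∏ j : Fin n, (r j).factorial) := by rw [e3]
      _ = (n + 1).factorial := e4
      _ = n.factorial * (n + 1) := by rw [Nat.factorial_succ]; ring
  exact Nat.eq_of_mul_eq_mul_right (by omega) hfin
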